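/- Let ρ be a density matrix on X_1⊗…⊗X_m and σ a density matrix on Y_1⊗…⊗Y_m (all factors finite-dimensional). Regard the tensor product ρ⊗σ as a density matrix on the m systems (X_1Y_1)⊗(X_2Y_2)⊗…⊗(X_mY_m), where the i-th system is the pair X_iY_i. Then the multiparty squashed entanglement is subadditive: E_sq(X_1Y_1;X_2Y_2;…;X_mY_m)_{ρ⊗σ} ≤ E_sq(X_1;X_2;…;X_m)_ρ + E_sq(Y_1;Y_2;…;Y_m)_σ. -/

import Mathlib

open scoped BigOperators ComplexOrder

/-- Von Neumann entropy (base 2) of a matrix, via its eigenvalues when Hermitian. -/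
noncomputable def vnEntropy {n : Type} [Fintype n] [DecidableEq n] (ρ : Matrix n n ℂ) : ℝ :=
  if h : ρ.IsHermitian then ∑ i, -(h.eigenvalues i * Real.logb 2 (h.eigenvalues i)) else 0

/-- A density matrix: positive semidefinite with unit trace. -/
def IsDensityMatrix {n : Type} [Fintype n] (ρ : Matrix n n ℂ) : Prop :=
  ρ.PosSemidef ∧ ρ.trace = 1

/-- Reduced density matrix of a multipartite state on the factors in `S`. -/
noncomputable def reduced {ι : Type} [Fintype ι] [DecidableEq ι] {τ : ι → Type}
    [∀ i, Fintype (τ i)]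
    (ρ : Matrix (∀ i, τ i) (∀ i, τ i) ℂ) (S : Finset ι) :
    Matrix (∀ i : {j // j ∈ S}, τ i.1) (∀ i : {j // j ∈ S}, τ i.1) ℂ :=
  Matrix.of fun x y => ∑ z : ∀ i : {j // j ∉ S}, τ i.1,
    ρ (fun i => if h : i ∈ S then x ⟨i, h⟩ else z ⟨i, h⟩)
      (fun i => if h : i ∈ S then y ⟨i, h⟩ else z ⟨i, h⟩)

/-- Entropy of the subsystem `S` of a multipartite state. -/
noncomputable def entS {ι : Type} [Fintype ι] [DecidableEq ι] {τ : ι → Type}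
    [∀ i, Fintype (τ i)] [∀ i, DecidableEq (τ i)]
    (ρ : Matrix (∀ i, τ i) (∀ i, τ i) ℂ) (S : Finset ι) : ℝ :=
  vnEntropy (reduced ρ S)

/-- Reduced state on the factors in `S` together with the extra system `E`. -/
noncomputable def reducedE {ι : Type} [Fintype ι] [DecidableEq ι] {τ : ι → Type}
    [∀ i, Fintype (τ i)] {E : Type} [Fintype E]
    (ρ : Matrix ((∀ i, τ i) × E) ((∀ i, τ i) × E) ℂ) (S : Finset ι) :
    Matrix ((∀ i : {j // j ∈ S}, τ i.1) × E) ((∀ i : {j // j ∈ S}, τ i.1) × E) ℂ :=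
  Matrix.of fun x y => ∑ z : ∀ i : {j // j ∉ S}, τ i.1,
    ρ ((fun i => if h : i ∈ S then x.1 ⟨i, h⟩ else z ⟨i, h⟩), x.2)
      ((fun i => if h : i ∈ S then y.1 ⟨i, h⟩ else z ⟨i, h⟩), y.2)

/-- Entropy H(S,E) of the subsystem S together with the extra system E. -/
noncomputable def entSE {ι : Type} [Fintype ι] [DecidableEq ι] {τ : ι → Type}
    [∀ i, Fintype (τ i)] [∀ i, DecidableEq (τ i)] {E : Type} [Fintype E] [DecidableEq E]
    (ρ : Matrix ((∀ i, τ i) × E) ((∀ i, τ i) × E) ℂ) (S : Finset ι) : ℝ :=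
  vnEntropy (reducedE ρ S)

/-- Reduced state on the factors in `S` alone (tracing out `E` and the rest). -/
noncomputable def reducedA {ι : Type} [Fintype ι] [DecidableEq ι] {τ : ι → Type}
    [∀ i, Fintype (τ i)] {E : Type} [Fintype E]
    (ρ : Matrix ((∀ i, τ i) × E) ((∀ i, τ i) × E) ℂ) (S : Finset ι) :
    Matrix (∀ i : {j // j ∈ S}, τ i.1) (∀ i : {j // j ∈ S}, τ i.1) ℂ :=
  Matrix.of fun x y => ∑ z : ∀ i : {j // j ∉ S}, τ i.1, ∑ e : E,
    ρ ((fun i => if h : i ∈ S then x ⟨i, h⟩ else z ⟨i, h⟩), e)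
      ((fun i => if h : i ∈ S then y ⟨i, h⟩ else z ⟨i, h⟩), e)

/-- Entropy H(S) (tracing out `E` as well). -/
noncomputable def entSA {ι : Type} [Fintype ι] [DecidableEq ι] {τ : ι → Type}
    [∀ i, Fintype (τ i)] [∀ i, DecidableEq (τ i)] {E : Type} [Fintype E] [DecidableEq E]
    (ρ : Matrix ((∀ i, τ i) × E) ((∀ i, τ i) × E) ℂ) (S : Finset ι) : ℝ :=
  vnEntropy (reducedA ρ S)

/-- Partial trace over the extension system `E`. -/
noncomputable def ptraceE {ι : Type} {τ : ι → Type} {E : Type} [Fintype E]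
    (ρ : Matrix ((∀ i, τ i) × E) ((∀ i, τ i) × E) ℂ) :
    Matrix (∀ i, τ i) (∀ i, τ i) ℂ :=
  Matrix.of fun x y => ∑ e : E, ρ (x, e) (y, e)

/-- Conditional multiparty information I(X_1;…;X_m|E). -/
noncomputable def condMI {ι : Type} [Fintype ι] [DecidableEq ι] {τ : ι → Type}
    [∀ i, Fintype (τ i)] [∀ i, DecidableEq (τ i)] {E : Type} [Fintype E] [DecidableEq E]
    (ρ : Matrix ((∀ i, τ i) × E) ((∀ i, τ i) × E) ℂ) : ℝ :=
  (∑ i : ι, entSE ρ {i}) - entSE ρ Finset.univ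
    - ((Fintype.card ι : ℝ) - 1) * entSE ρ (∅ : Finset ι)

/-- Multiparty squashed entanglement. -/
noncomputable def Esq {ι : Type} [Fintype ι] [DecidableEq ι] {τ : ι → Type}
    [∀ i, Fintype (τ i)] [∀ i, DecidableEq (τ i)]
    (ρ : Matrix (∀ i, τ i) (∀ i, τ i) ℂ) : ℝ :=
  (1 / 2) * sInf {x : ℝ | ∃ dE : ℕ, 1 ≤ dE ∧
    ∃ ρe : Matrix ((∀ i, τ i) × Fin dE) ((∀ i, τ i) × Fin dE) ℂ,
      IsDensityMatrix ρe ∧ ptraceE ρe = ρ ∧ x = condMI ρe}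

/-- The pure density matrix |v⟩⟨v|. -/
noncomputable def pureDM {α : Type} (v : α → ℂ) : Matrix α α ℂ :=
  Matrix.of fun x y => v x * (starRingEnd ℂ) (v y)


/-- The tensor product ρ ⊗ σ of a state on X_1 ⊗ ⋯ ⊗ X_m and a state on Y_1 ⊗ ⋯ ⊗ Y_m,
regarded as a state on the m paired systems (X_1Y_1) ⊗ ⋯ ⊗ (X_mY_m). -/
noncomputable def pairedProd {m : ℕ} {dX dY : Fin m → ℕ}
    (ρ : Matrix (∀ i, Fin (dX i)) (∀ i, Fin (dX i)) ℂ)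
    (σ : Matrix (∀ i, Fin (dY i)) (∀ i, Fin (dY i)) ℂ) :
    Matrix (∀ i, Fin (dX i) × Fin (dY i)) (∀ i, Fin (dX i) × Fin (dY i)) ℂ :=
  Matrix.of fun u v =>
    ρ (fun i => (u i).1) (fun i => (v i).1) * σ (fun i => (u i).2) (fun i => (v i).2)


open scoped MatrixOrder in
theorem Matrix.posSemidef_iff_eq_transpose_mul_self {n : Type} [Fintype n] {A : Matrix n n ℂ} :
    A.PosSemidef ↔ ∃ B : Matrix n n ℂ, A = B.conjTranspose * B := by
  classical
  constructor
  · intro h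
    obtain ⟨B, hB⟩ := CStarAlgebra.nonneg_iff_eq_star_mul_self.mp h.nonneg
    exact ⟨B, hB⟩
  · rintro ⟨B, rfl⟩
    exact Matrix.posSemidef_conjTranspose_mul_self B

/-! ### Auxiliary development -/

section EntropyToolkit

open Matrix Polynomial
open scoped Kronecker ComplexOrder

variable {n : Type} [Fintype n] [DecidableEq n] {m : Type} [Fintype m] [DecidableEq m]

/-- Entropy functional computed from the roots of a polynomial. -/
noncomputable def entRoots (p : Polynomial ℂ) : ℝ :=
  (p.roots.map fun z => -(z.re * Real.logb 2 z.re)).sum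

lemma charmatrix_mul_conj {U V B : Matrix n n ℂ} (h : U * V = 1) :
    charmatrix (U * B * V) = U.map C * charmatrix B * V.map C := by
  have hUV : U.map C * V.map C = (1 : Matrix n n ℂ[X]) := by
    rw [← Matrix.map_mul, h, Matrix.map_one C (map_zero C) (map_one C)]
  rw [charmatrix, charmatrix, Matrix.mul_sub, Matrix.sub_mul]
  congr 1
  · rw [mul_assoc, (Matrix.scalar_commute (X : ℂ[X]) (fun r => Commute.all _ _) (V.map C)).eq,
      ← mul_assoc, hUV, one_mul]
  · rw [RingHom.mapMatrix_apply, RingHom.mapMatrix_apply, ← Matrix.map_mul, ← Matrix.map_mul]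

lemma charpoly_conj_of_mul_eq_one {U V B : Matrix n n ℂ} (h : U * V = 1) :
    (U * B * V).charpoly = B.charpoly := by
  have hUV : U.map C * V.map C = (1 : Matrix n n ℂ[X]) := by
    rw [← Matrix.map_mul, h, Matrix.map_one C (map_zero C) (map_one C)]
  have hdet : (U.map C).det * (V.map C).det = 1 := by rw [← det_mul, hUV, det_one]
  rw [Matrix.charpoly, Matrix.charpoly, charmatrix_mul_conj h, det_mul, det_mul,
    mul_right_comm, hdet, one_mul]

lemma charpoly_diagonal' (d : n → ℂ) :
    (Matrix.diagonal d).charpoly = ∏ i, (X - C (d i)) := by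
  have hcm : charmatrix (Matrix.diagonal d) = Matrix.diagonal fun i => (X : ℂ[X]) - C (d i) := by
    ext i j
    by_cases hij : i = j
    · subst hij; simp [charmatrix_apply, Matrix.diagonal_apply_eq]
    · simp [charmatrix_apply, Matrix.diagonal_apply_ne _ hij, hij]
  rw [Matrix.charpoly, hcm, det_diagonal]

lemma charpoly_hermitian {A : Matrix n n ℂ} (hA : A.IsHermitian) :
    A.charpoly = ∏ i, (X - C ((hA.eigenvalues i : ℂ))) := by
  have hU : (hA.eigenvectorUnitary : Matrix n n ℂ) *
      star (hA.eigenvectorUnitary : Matrix n n ℂ) = 1 :=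
    Matrix.mem_unitaryGroup_iff.mp hA.eigenvectorUnitary.2
  conv_lhs => rw [hA.spectral_theorem, Unitary.conjStarAlgAut_apply]
  rw [charpoly_conj_of_mul_eq_one hU, charpoly_diagonal']
  rfl

lemma roots_prod_X_sub_C'' (c : n → ℂ) :
    (∏ i, (X - C (c i))).roots = Finset.univ.val.map c := by
  have h := roots_multiset_prod_X_sub_C (Finset.univ.val.map c)
  rw [Multiset.map_map] at h
  exact h

lemma vnEntropy_eq_sum {A : Matrix n n ℂ} (hA : A.IsHermitian) :
    vnEntropy A = ∑ i, -(hA.eigenvalues i * Real.logb 2 (hA.eigenvalues i)) := by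
  rw [vnEntropy, dif_pos hA]

lemma vnEntropy_eq_entRoots {A : Matrix n n ℂ} (hA : A.IsHermitian) :
    vnEntropy A = entRoots A.charpoly := by
  rw [vnEntropy_eq_sum hA, entRoots, charpoly_hermitian hA, roots_prod_X_sub_C'',
    Multiset.map_map, Finset.sum]
  congr 1

lemma vnEntropy_eq_of_charpoly {A : Matrix n n ℂ} {B : Matrix m m ℂ}
    (hA : A.IsHermitian) (hB : B.IsHermitian) (h : A.charpoly = B.charpoly) :
    vnEntropy A = vnEntropy B := by
  rw [vnEntropy_eq_entRoots hA, vnEntropy_eq_entRoots hB, h]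

lemma IsHermitian.reindex' {A : Matrix n n ℂ} (hA : A.IsHermitian) (e : n ≃ m) :
    (Matrix.reindex e e A).IsHermitian := by
  have : (Matrix.reindex e e A)ᴴ = Matrix.reindex e e Aᴴ := by
    simp [Matrix.reindex_apply, Matrix.conjTranspose_submatrix]
  rw [Matrix.IsHermitian, this, hA.eq]

lemma vnEntropy_reindex (e : n ≃ m) (A : Matrix n n ℂ) :
    vnEntropy (Matrix.reindex e e A) = vnEntropy A := by
  by_cases hA : A.IsHermitian
  · exact vnEntropy_eq_of_charpoly (IsHermitian.reindex' hA e) hA (Matrix.charpoly_reindex e A)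
  · have h2 : ¬ (Matrix.reindex e e A).IsHermitian := by
      intro h
      have h3 := IsHermitian.reindex' h e.symm
      rw [show Matrix.reindex e.symm e.symm (Matrix.reindex e e A) = A by
        ext i j; simp] at h3
      exact hA h3
    rw [vnEntropy, dif_neg h2, vnEntropy, dif_neg hA]

lemma charpoly_transpose' (A : Matrix n n ℂ) : Aᵀ.charpoly = A.charpoly := by
  have hcm : charmatrix Aᵀ = (charmatrix A)ᵀ := by
    ext i j
    by_cases hij : i = j
    · subst hij; simp [charmatrix_apply]
    · simp [charmatrix_apply, Matrix.diagonal_apply_ne _ hij,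
        Matrix.diagonal_apply_ne _ (Ne.symm hij)]
  rw [Matrix.charpoly, Matrix.charpoly, hcm, det_transpose]

lemma vnEntropy_transpose {A : Matrix n n ℂ} (hA : A.IsHermitian) :
    vnEntropy Aᵀ = vnEntropy A :=
  vnEntropy_eq_of_charpoly hA.transpose hA (charpoly_transpose' A)

lemma charpoly_zero_mat : (0 : Matrix n n ℂ).charpoly = X ^ (Fintype.card n) := by
  rw [← Matrix.diagonal_zero, charpoly_diagonal']
  simp [Finset.card_univ]

lemma charpoly_mul_comm' (A B : Matrix n n ℂ) : (A * B).charpoly = (B * A).charpoly := by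
  have key : (Matrix.fromBlocks 1 A 0 1 : Matrix (n ⊕ n) (n ⊕ n) ℂ) *
      Matrix.fromBlocks 0 0 B (B * A) * Matrix.fromBlocks 1 (-A) 0 1
      = Matrix.fromBlocks (A * B) 0 B 0 := by
    rw [Matrix.fromBlocks_multiply, Matrix.fromBlocks_multiply]
    simp [Matrix.mul_assoc, Matrix.mul_neg, Matrix.neg_mul]
  have hmul : (Matrix.fromBlocks 1 A 0 1 : Matrix (n ⊕ n) (n ⊕ n) ℂ) *
      Matrix.fromBlocks 1 (-A) 0 1 = 1 := by
    rw [Matrix.fromBlocks_multiply]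
    simp [Matrix.fromBlocks_one]
  have h := charpoly_conj_of_mul_eq_one (B := Matrix.fromBlocks 0 0 B (B * A)) hmul
  rw [key] at h
  rw [Matrix.charpoly_fromBlocks_zero₁₂, Matrix.charpoly_fromBlocks_zero₁₂] at h
  rw [charpoly_zero_mat] at h
  have hX : (X : ℂ[X]) ^ (Fintype.card n) ≠ 0 := pow_ne_zero _ X_ne_zero
  have h' : (A * B).charpoly * X ^ (Fintype.card n)
      = (B * A).charpoly * X ^ (Fintype.card n) := by
    rw [h]; ring
  exact mul_right_cancel₀ hX h'

lemma charpoly_mul_comm_rect (M : Matrix n m ℂ) (N : Matrix m n ℂ) :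
    (M * N).charpoly * X ^ (Fintype.card m) = (N * M).charpoly * X ^ (Fintype.card n) := by
  have h := _root_.charpoly_mul_comm' (Matrix.fromBlocks 0 M 0 0 : Matrix (n ⊕ m) (n ⊕ m) ℂ)
    (Matrix.fromBlocks 0 0 N 0)
  rw [Matrix.fromBlocks_multiply, Matrix.fromBlocks_multiply] at h
  simp only [Matrix.mul_zero, Matrix.zero_mul, add_zero, zero_add] at h
  rw [Matrix.charpoly_fromBlocks_zero₁₂, Matrix.charpoly_fromBlocks_zero₁₂,
    charpoly_zero_mat, charpoly_zero_mat] at h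
  rw [h]; ring

lemma entRoots_mul_X_pow (p : ℂ[X]) (hp : p ≠ 0) (k : ℕ) :
    entRoots (p * X ^ k) = entRoots p := by
  rw [entRoots, entRoots, Polynomial.roots_mul (mul_ne_zero hp (pow_ne_zero _ X_ne_zero)),
    Polynomial.roots_pow, Polynomial.roots_X, Multiset.map_add, Multiset.sum_add]
  have : ((k • ({0} : Multiset ℂ)).map fun z => -(z.re * Real.logb 2 z.re)).sum = 0 := by
    rw [Multiset.map_nsmul, Multiset.sum_nsmul]
    simp
  rw [this, add_zero]

lemma vnEntropy_mul_conjTranspose (M : Matrix n m ℂ) :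
    vnEntropy (M * Mᴴ) = vnEntropy (Mᴴ * M) := by
  rw [vnEntropy_eq_entRoots (Matrix.isHermitian_mul_conjTranspose_self M),
    vnEntropy_eq_entRoots (Matrix.isHermitian_conjTranspose_mul_self M),
    ← entRoots_mul_X_pow (M * Mᴴ).charpoly (Matrix.charpoly_monic _).ne_zero (Fintype.card m),
    ← entRoots_mul_X_pow (Mᴴ * M).charpoly (Matrix.charpoly_monic _).ne_zero (Fintype.card n),
    charpoly_mul_comm_rect]

lemma trace_eq_sum_eigenvalues {A : Matrix n n ℂ} (hA : A.IsHermitian) :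
    A.trace = ∑ i, (hA.eigenvalues i : ℂ) := by
  have hU : star (hA.eigenvectorUnitary : Matrix n n ℂ) *
      (hA.eigenvectorUnitary : Matrix n n ℂ) = 1 :=
    Matrix.mem_unitaryGroup_iff'.mp hA.eigenvectorUnitary.2
  conv_lhs => rw [hA.spectral_theorem, Unitary.conjStarAlgAut_apply]
  rw [Matrix.trace_mul_cycle, hU, Matrix.one_mul, Matrix.trace_diagonal]
  rfl

lemma sum_eigenvalues_eq_one {A : Matrix n n ℂ} (hA : IsDensityMatrix A) :
    ∑ i, hA.1.1.eigenvalues i = 1 := by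
  have h' : (∑ i, (hA.1.1.eigenvalues i : ℂ)) = 1 := by
    rw [← trace_eq_sum_eigenvalues hA.1.1, hA.2]
  exact_mod_cast h'

end EntropyToolkit


section TwoParty

open Matrix
open scoped Kronecker ComplexOrder

variable {n : Type} [Fintype n] [DecidableEq n]
variable {U : Type} [Fintype U] [DecidableEq U] {V : Type} [Fintype V] [DecidableEq V]

/-- Partial trace over the second factor. -/
noncomputable def margA (ω : Matrix (U × V) (U × V) ℂ) : Matrix U U ℂ :=
  Matrix.of fun a a' => ∑ v, ω (a, v) (a', v)

/-- Partial trace over the first factor. -/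
noncomputable def margB (ω : Matrix (U × V) (U × V) ℂ) : Matrix V V ℂ :=
  Matrix.of fun b b' => ∑ u, ω (u, b) (u, b')

lemma posSemidef_sum {ι : Type} (s : Finset ι) (f : ι → Matrix n n ℂ)
    (h : ∀ i ∈ s, (f i).PosSemidef) : (∑ i ∈ s, f i).PosSemidef := by
  classical
  induction s using Finset.induction_on with
  | empty => simpa using Matrix.PosSemidef.zero
  | @insert a s ha ih =>
    rw [Finset.sum_insert ha]
    exact (h a (Finset.mem_insert_self a s)).add
      (ih fun i hi => h i (Finset.mem_insert_of_mem hi))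

/-- Embedding matrix used to express partial traces as compressions. -/
noncomputable def embA (v : V) : Matrix U (U × V) ℂ :=
  Matrix.of fun u p => if p = (u, v) then 1 else 0

lemma sandwich_embA (ω : Matrix (U × V) (U × V) ℂ) (v : V) (u u' : U) :
    (embA (U := U) v * ω * (embA (U := U) v)ᴴ : Matrix U U ℂ) u u' = ω (u, v) (u', v) := by
  rw [Matrix.mul_apply]
  have h1 : ∀ q, (embA (U := U) v * ω : Matrix U (U × V) ℂ) u q = ω (u, v) q := by
    intro q
    rw [Matrix.mul_apply]
    simp [embA, ite_mul, Finset.sum_ite_eq']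
  have h2 : ∀ q, ((embA (U := U) v)ᴴ : Matrix (U × V) U ℂ) q u' = if q = (u', v) then 1 else 0 := by
    intro q
    simp [embA, Matrix.conjTranspose_apply, apply_ite (starRingEnd ℂ)]
  calc (∑ q, (embA (U := U) v * ω : Matrix U (U × V) ℂ) u q * ((embA (U := U) v)ᴴ : Matrix (U × V) U ℂ) q u')
      = ∑ q, ω (u, v) q * (if q = (u', v) then 1 else 0) := by
        refine Finset.sum_congr rfl fun q _ => ?_
        rw [h1, h2]
    _ = ω (u, v) (u', v) := by simp [mul_ite, Finset.sum_ite_eq']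

lemma margA_eq_sum (ω : Matrix (U × V) (U × V) ℂ) :
    margA ω = ∑ v : V, (embA (U := U) v * ω * (embA (U := U) v)ᴴ : Matrix U U ℂ) := by
  ext u u'
  rw [Matrix.sum_apply]
  exact Finset.sum_congr rfl fun v _ => (sandwich_embA ω v u u').symm

noncomputable def embB (u : U) : Matrix V (U × V) ℂ :=
  Matrix.of fun v p => if p = (u, v) then 1 else 0

lemma sandwich_embB (ω : Matrix (U × V) (U × V) ℂ) (u : U) (v v' : V) :
    (embB (V := V) u * ω * (embB (V := V) u)ᴴ : Matrix V V ℂ) v v' = ω (u, v) (u, v') := by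
  rw [Matrix.mul_apply]
  have h1 : ∀ q, (embB (V := V) u * ω : Matrix V (U × V) ℂ) v q = ω (u, v) q := by
    intro q
    rw [Matrix.mul_apply]
    simp [embB, ite_mul, Finset.sum_ite_eq']
  have h2 : ∀ q, ((embB (V := V) u)ᴴ : Matrix (U × V) V ℂ) q v' = if q = (u, v') then 1 else 0 := by
    intro q
    simp [embB, Matrix.conjTranspose_apply, apply_ite (starRingEnd ℂ)]
  calc (∑ q, (embB (V := V) u * ω : Matrix V (U × V) ℂ) v q * ((embB (V := V) u)ᴴ : Matrix (U × V) V ℂ) q v')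
      = ∑ q, ω (u, v) q * (if q = (u, v') then 1 else 0) := by
        refine Finset.sum_congr rfl fun q _ => ?_
        rw [h1, h2]
    _ = ω (u, v) (u, v') := by simp [mul_ite, Finset.sum_ite_eq']

lemma margB_eq_sum (ω : Matrix (U × V) (U × V) ℂ) :
    margB ω = ∑ u : U, (embB (V := V) u * ω * (embB (V := V) u)ᴴ : Matrix V V ℂ) := by
  ext v v'
  rw [Matrix.sum_apply]
  exact Finset.sum_congr rfl fun u _ => (sandwich_embB ω u v v').symm

lemma margA_posSemidef {ω : Matrix (U × V) (U × V) ℂ} (hω : ω.PosSemidef) :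
    (margA ω).PosSemidef := by
  rw [margA_eq_sum]
  exact posSemidef_sum _ _ fun v _ => hω.mul_mul_conjTranspose_same (embA (U := U) v)

lemma margB_posSemidef {ω : Matrix (U × V) (U × V) ℂ} (hω : ω.PosSemidef) :
    (margB ω).PosSemidef := by
  rw [margB_eq_sum]
  exact posSemidef_sum _ _ fun u _ => hω.mul_mul_conjTranspose_same (embB (V := V) u)

lemma margA_trace (ω : Matrix (U × V) (U × V) ℂ) : (margA ω).trace = ω.trace := by
  rw [Matrix.trace, Matrix.trace, Fintype.sum_prod_type]
  rfl

lemma margB_trace (ω : Matrix (U × V) (U × V) ℂ) : (margB ω).trace = ω.trace := by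
  rw [Matrix.trace, Matrix.trace, Fintype.sum_prod_type, Finset.sum_comm]
  rfl

lemma margA_density {ω : Matrix (U × V) (U × V) ℂ} (hω : IsDensityMatrix ω) :
    IsDensityMatrix (margA ω) :=
  ⟨margA_posSemidef hω.1, by rw [margA_trace, hω.2]⟩

lemma margB_density {ω : Matrix (U × V) (U × V) ℂ} (hω : IsDensityMatrix ω) :
    IsDensityMatrix (margB ω) :=
  ⟨margB_posSemidef hω.1, by rw [margB_trace, hω.2]⟩

/-- The basic pointwise inequality behind Gibbs' inequality. -/
lemma klein_term {a c : ℝ} (ha : 0 ≤ a) (hc : 0 ≤ c) (h : c = 0 → a = 0) :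
    (a - c) / Real.log 2 ≤ a * Real.logb 2 a - a * Real.logb 2 c := by
  have hl2 : 0 < Real.log 2 := Real.log_pos one_lt_two
  rcases eq_or_lt_of_le ha with h0 | hapos
  · rw [← h0]
    simp only [zero_sub, zero_mul, sub_zero, sub_self]
    exact div_nonpos_of_nonpos_of_nonneg (neg_nonpos_of_nonneg hc) hl2.le
  · have hcpos : 0 < c := by
      rcases eq_or_lt_of_le hc with h1 | h1
      · exact absurd (h h1.symm) (ne_of_gt hapos)
      · exact h1
    have hlog := Real.log_le_sub_one_of_pos (div_pos hcpos hapos)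
    rw [Real.log_div (ne_of_gt hcpos) (ne_of_gt hapos)] at hlog
    rw [Real.logb, Real.logb]
    have expand : a * (Real.log a / Real.log 2) - a * (Real.log c / Real.log 2)
        = (a * Real.log a - a * Real.log c) / Real.log 2 := by ring
    rw [expand, div_le_div_iff_of_pos_right hl2]
    have h2 := mul_le_mul_of_nonneg_left hlog hapos.le
    have h3 : a * (c / a - 1) = c - a := by field_simp
    rw [h3, mul_sub] at h2
    linarith

lemma klein_term' {lam c q : ℝ} (hl : 0 ≤ lam) (hc : 0 ≤ c) (hq : 0 ≤ q)
    (h : c = 0 → lam * q = 0) :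
    (lam * q - c * q) / Real.log 2
      ≤ lam * q * Real.logb 2 lam - lam * q * Real.logb 2 c := by
  rcases eq_or_lt_of_le hq with h0 | hqpos
  · simp [← h0]
  · have h' : c = 0 → lam = 0 := fun hc0 =>
      (mul_eq_zero.mp (h hc0)).resolve_right (ne_of_gt hqpos)
    have hk := klein_term hl hc h'
    calc (lam * q - c * q) / Real.log 2 = ((lam - c) / Real.log 2) * q := by ring
      _ ≤ (lam * Real.logb 2 lam - lam * Real.logb 2 c) * q :=
          mul_le_mul_of_nonneg_right hk hq
      _ = lam * q * Real.logb 2 lam - lam * q * Real.logb 2 c := by ring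

lemma nonempty_of_density {A : Matrix n n ℂ} (hA : IsDensityMatrix A) : Nonempty n := by
  by_contra h
  have : IsEmpty n := not_nonempty_iff.mp h
  have h1 := sum_eigenvalues_eq_one hA
  rw [Finset.univ_eq_empty, Finset.sum_empty] at h1
  norm_num at h1

lemma eigenvalue_le_one {A : Matrix n n ℂ} (hA : IsDensityMatrix A) (i : n) :
    hA.1.1.eigenvalues i ≤ 1 := by
  have h1 := sum_eigenvalues_eq_one hA
  have h2 := Finset.single_le_sum (f := hA.1.1.eigenvalues)
    (fun j _ => hA.1.eigenvalues_nonneg j) (Finset.mem_univ i)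
  linarith

lemma vnEntropy_nonneg {A : Matrix n n ℂ} (hA : IsDensityMatrix A) : 0 ≤ vnEntropy A := by
  rw [vnEntropy_eq_sum hA.1.1]
  apply Finset.sum_nonneg
  intro i _
  have h0 := hA.1.eigenvalues_nonneg i
  have h1 := eigenvalue_le_one hA i
  have h2 : Real.logb 2 (hA.1.1.eigenvalues i) ≤ 0 := Real.logb_nonpos one_lt_two h0 h1
  nlinarith

lemma vnEntropy_le_logb_card {A : Matrix n n ℂ} (hA : IsDensityMatrix A) :
    vnEntropy A ≤ Real.logb 2 (Fintype.card n) := by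
  have hne : Nonempty n := nonempty_of_density hA
  have hcard : (0 : ℝ) < Fintype.card n := by
    have := Fintype.card_pos_iff.mpr hne
    exact_mod_cast this
  set lam := hA.1.1.eigenvalues with hlam
  have key : ∀ i, (lam i - 1 / (Fintype.card n : ℝ)) / Real.log 2
      ≤ lam i * Real.logb 2 (lam i) - lam i * Real.logb 2 (1 / (Fintype.card n : ℝ)) :=
    fun i => klein_term (hA.1.eigenvalues_nonneg i) (by positivity)
      (fun h => absurd h (by positivity))
  have hsum := Finset.sum_le_sum (fun i (_ : i ∈ Finset.univ) => key i)
  have e2 : ∑ i, ((lam i - 1 / (Fintype.card n : ℝ)) / Real.log 2) = 0 := by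
    rw [← Finset.sum_div, Finset.sum_sub_distrib, sum_eigenvalues_eq_one hA,
      Finset.sum_const, Finset.card_univ, nsmul_eq_mul]
    rw [mul_one_div, div_self (ne_of_gt hcard), sub_self, zero_div]
  have e1 : ∑ i, (lam i * Real.logb 2 (lam i) - lam i * Real.logb 2 (1 / (Fintype.card n : ℝ)))
      = ∑ i, lam i * Real.logb 2 (lam i) + Real.logb 2 (Fintype.card n) := by
    rw [Finset.sum_sub_distrib, ← Finset.sum_mul, sum_eigenvalues_eq_one hA, one_mul,
      one_div, Real.logb_inv]
    ring
  rw [e2, e1] at hsum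
  rw [vnEntropy_eq_sum hA.1.1]
  have : ∑ i, -(lam i * Real.logb 2 (lam i)) = -∑ i, lam i * Real.logb 2 (lam i) := by
    rw [Finset.sum_neg_distrib]
  rw [this]
  linarith


/-! #### Kronecker helpers and conjugation of marginals -/

lemma kron_conjT (A : Matrix U U ℂ) (B : Matrix V V ℂ) : (A ⊗ₖ B)ᴴ = Aᴴ ⊗ₖ Bᴴ := by
  ext p q
  simp [Matrix.conjTranspose_apply, Matrix.kroneckerMap_apply, mul_comm]

/-- Matrix units. -/
noncomputable def eMat (i' i : U) : Matrix U U ℂ :=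
  Matrix.of fun w u => (if w = i' then 1 else 0) * (if u = i then 1 else 0)

lemma trace_mul_eMat (M : Matrix U U ℂ) (i' i : U) :
    (M * eMat i' i).trace = M i i' := by
  rw [Matrix.trace]
  have h : ∀ u, (M * eMat i' i).diag u
      = (if u = i then 1 else 0) * M u i' := by
    intro u
    rw [Matrix.diag_apply, Matrix.mul_apply]
    simp [eMat, mul_ite, ite_mul, Finset.sum_ite_eq', mul_comm]
  rw [Finset.sum_congr rfl fun u _ => h u]
  simp [ite_mul, Finset.sum_ite_eq']

lemma trace_mul_kron_one (M : Matrix (U × V) (U × V) ℂ) (N : Matrix U U ℂ) :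
    (M * (N ⊗ₖ (1 : Matrix V V ℂ))).trace = (margA M * N).trace := by
  have lhs : (M * (N ⊗ₖ (1 : Matrix V V ℂ))).trace
      = ∑ u, ∑ v, ∑ u', ∑ v', M (u, v) (u', v') * (N u' u * (if v' = v then (1:ℂ) else 0)) := by
    rw [Matrix.trace, Fintype.sum_prod_type]
    refine Finset.sum_congr rfl fun u _ => Finset.sum_congr rfl fun v _ => ?_
    rw [Matrix.diag_apply, Matrix.mul_apply, Fintype.sum_prod_type]
    refine Finset.sum_congr rfl fun u' _ => Finset.sum_congr rfl fun v' _ => ?_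
    rw [Matrix.kroneckerMap_apply, Matrix.one_apply]
  have rhs : (margA M * N).trace = ∑ u, ∑ u', (∑ v, M (u, v) (u', v)) * N u' u := by
    rw [Matrix.trace]
    refine Finset.sum_congr rfl fun u _ => ?_
    rw [Matrix.diag_apply, Matrix.mul_apply]
    rfl
  rw [lhs, rhs]
  refine Finset.sum_congr rfl fun u _ => ?_
  rw [Finset.sum_comm]
  refine Finset.sum_congr rfl fun u' _ => ?_
  rw [Finset.sum_mul]
  refine Finset.sum_congr rfl fun v _ => ?_
  simp [mul_ite, Finset.sum_ite_eq']

lemma trace_mul_one_kron (M : Matrix (U × V) (U × V) ℂ) (N : Matrix V V ℂ) :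
    (M * ((1 : Matrix U U ℂ) ⊗ₖ N)).trace = (margB M * N).trace := by
  have lhs : (M * ((1 : Matrix U U ℂ) ⊗ₖ N)).trace
      = ∑ u, ∑ v, ∑ u', ∑ v', M (u, v) (u', v') * ((if u' = u then (1:ℂ) else 0) * N v' v) := by
    rw [Matrix.trace, Fintype.sum_prod_type]
    refine Finset.sum_congr rfl fun u _ => Finset.sum_congr rfl fun v _ => ?_
    rw [Matrix.diag_apply, Matrix.mul_apply, Fintype.sum_prod_type]
    refine Finset.sum_congr rfl fun u' _ => Finset.sum_congr rfl fun v' _ => ?_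
    rw [Matrix.kroneckerMap_apply, Matrix.one_apply]
  have rhs : (margB M * N).trace = ∑ v, ∑ v', (∑ u, M (u, v) (u, v')) * N v' v := by
    rw [Matrix.trace]
    refine Finset.sum_congr rfl fun v _ => ?_
    rw [Matrix.diag_apply, Matrix.mul_apply]
    rfl
  rw [lhs, rhs, Finset.sum_comm]
  refine Finset.sum_congr rfl fun v _ => ?_
  have swap : ∀ v' u, ∑ u', M (u, v) (u', v') * ((if u' = u then (1:ℂ) else 0) * N v' v)
      = M (u, v) (u, v') * N v' v := by
    intro v' u
    simp [mul_ite, Finset.sum_ite_eq']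
  calc ∑ u, ∑ u', ∑ v', M (u, v) (u', v') * ((if u' = u then (1:ℂ) else 0) * N v' v)
      = ∑ u, ∑ v', ∑ u', M (u, v) (u', v') * ((if u' = u then (1:ℂ) else 0) * N v' v) := by
        exact Finset.sum_congr rfl fun u _ => Finset.sum_comm
    _ = ∑ u, ∑ v', M (u, v) (u, v') * N v' v := by
        exact Finset.sum_congr rfl fun u _ => Finset.sum_congr rfl fun v' _ => swap v' u
    _ = ∑ v', (∑ u, M (u, v) (u, v')) * N v' v := by
        rw [Finset.sum_comm]
        exact Finset.sum_congr rfl fun v' _ => (Finset.sum_mul _ _ _).symm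

lemma margA_conj_kron (A : Matrix U U ℂ) (B : Matrix V V ℂ) (hB : B * Bᴴ = 1)
    (ω : Matrix (U × V) (U × V) ℂ) :
    margA ((A ⊗ₖ B)ᴴ * ω * (A ⊗ₖ B)) = Aᴴ * margA ω * A := by
  ext i i'
  rw [← trace_mul_eMat (margA ((A ⊗ₖ B)ᴴ * ω * (A ⊗ₖ B))) i' i,
    ← trace_mul_eMat (Aᴴ * margA ω * A) i' i, ← trace_mul_kron_one]
  have step1 : (A ⊗ₖ B) * ((eMat i' i ⊗ₖ (1 : Matrix V V ℂ)) * (A ⊗ₖ B)ᴴ)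
      = (A * eMat i' i * Aᴴ) ⊗ₖ (1 : Matrix V V ℂ) := by
    rw [kron_conjT, ← Matrix.mul_assoc, ← Matrix.mul_kronecker_mul, ← Matrix.mul_kronecker_mul,
      Matrix.mul_one, hB]
  calc ((A ⊗ₖ B)ᴴ * ω * (A ⊗ₖ B) * (eMat i' i ⊗ₖ (1 : Matrix V V ℂ))).trace
      = ((ω * ((A ⊗ₖ B) * ((eMat i' i ⊗ₖ (1 : Matrix V V ℂ)) * (A ⊗ₖ B)ᴴ)))).trace := by
        rw [show (A ⊗ₖ B)ᴴ * ω * (A ⊗ₖ B) * (eMat i' i ⊗ₖ (1 : Matrix V V ℂ))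
            = (A ⊗ₖ B)ᴴ * (ω * ((A ⊗ₖ B) * (eMat i' i ⊗ₖ (1 : Matrix V V ℂ)))) by
          simp only [Matrix.mul_assoc]]
        rw [Matrix.trace_mul_comm]
        try simp only [Matrix.mul_assoc]
    _ = (ω * ((A * eMat i' i * Aᴴ) ⊗ₖ (1 : Matrix V V ℂ))).trace := by rw [step1]
    _ = (margA ω * (A * eMat i' i * Aᴴ)).trace := trace_mul_kron_one _ _
    _ = (Aᴴ * margA ω * (A * eMat i' i)).trace := by
        rw [show margA ω * (A * eMat i' i * Aᴴ) = margA ω * (A * eMat i' i) * Aᴴ by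
          simp only [Matrix.mul_assoc]]
        rw [Matrix.trace_mul_cycle]
        try simp only [Matrix.mul_assoc]
    _ = (Aᴴ * margA ω * A * eMat i' i).trace := by simp only [Matrix.mul_assoc]

lemma margB_conj_kron (A : Matrix U U ℂ) (B : Matrix V V ℂ) (hA : A * Aᴴ = 1)
    (ω : Matrix (U × V) (U × V) ℂ) :
    margB ((A ⊗ₖ B)ᴴ * ω * (A ⊗ₖ B)) = Bᴴ * margB ω * B := by
  ext i i'
  rw [← trace_mul_eMat (margB ((A ⊗ₖ B)ᴴ * ω * (A ⊗ₖ B))) i' i,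
    ← trace_mul_eMat (Bᴴ * margB ω * B) i' i, ← trace_mul_one_kron]
  have step1 : (A ⊗ₖ B) * (((1 : Matrix U U ℂ) ⊗ₖ eMat i' i) * (A ⊗ₖ B)ᴴ)
      = (1 : Matrix U U ℂ) ⊗ₖ (B * eMat i' i * Bᴴ) := by
    rw [kron_conjT, ← Matrix.mul_assoc, ← Matrix.mul_kronecker_mul, ← Matrix.mul_kronecker_mul,
      Matrix.mul_one, hA]
  calc ((A ⊗ₖ B)ᴴ * ω * (A ⊗ₖ B) * ((1 : Matrix U U ℂ) ⊗ₖ eMat i' i)).trace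
      = ((ω * ((A ⊗ₖ B) * (((1 : Matrix U U ℂ) ⊗ₖ eMat i' i) * (A ⊗ₖ B)ᴴ)))).trace := by
        rw [show (A ⊗ₖ B)ᴴ * ω * (A ⊗ₖ B) * ((1 : Matrix U U ℂ) ⊗ₖ eMat i' i)
            = (A ⊗ₖ B)ᴴ * (ω * ((A ⊗ₖ B) * ((1 : Matrix U U ℂ) ⊗ₖ eMat i' i))) by
          simp only [Matrix.mul_assoc]]
        rw [Matrix.trace_mul_comm]
        try simp only [Matrix.mul_assoc]
    _ = (ω * ((1 : Matrix U U ℂ) ⊗ₖ (B * eMat i' i * Bᴴ))).trace := by rw [step1]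
    _ = (margB ω * (B * eMat i' i * Bᴴ)).trace := trace_mul_one_kron _ _
    _ = (Bᴴ * margB ω * (B * eMat i' i)).trace := by
        rw [show margB ω * (B * eMat i' i * Bᴴ) = margB ω * (B * eMat i' i) * Bᴴ by
          simp only [Matrix.mul_assoc]]
        rw [Matrix.trace_mul_cycle]
        try simp only [Matrix.mul_assoc]
    _ = (Bᴴ * margB ω * B * eMat i' i).trace := by simp only [Matrix.mul_assoc]


/-! #### Subadditivity of von Neumann entropy (Klein's inequality) -/

theorem vnEntropy_subadd {ω : Matrix (U × V) (U × V) ℂ} (hω : IsDensityMatrix ω) :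
    vnEntropy ω ≤ vnEntropy (margA ω) + vnEntropy (margB ω) := by
  classical
  have hH : ω.IsHermitian := hω.1.1
  have hdA := margA_density hω
  have hdB := margB_density hω
  have hA : (margA ω).IsHermitian := hdA.1.1
  have hB : (margB ω).IsHermitian := hdB.1.1
  set lam : (U × V) → ℝ := hH.eigenvalues with hlam_def
  set al : U → ℝ := hA.eigenvalues with hal_def
  set be : V → ℝ := hB.eigenvalues with hbe_def
  set Uw : Matrix (U × V) (U × V) ℂ := (hH.eigenvectorUnitary : Matrix (U × V) (U × V) ℂ)
    with hUw_def
  set UA : Matrix U U ℂ := (hA.eigenvectorUnitary : Matrix U U ℂ) with hUA_def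
  set UB : Matrix V V ℂ := (hB.eigenvectorUnitary : Matrix V V ℂ) with hUB_def
  have hUw1 : Uw * Uwᴴ = 1 := Matrix.mem_unitaryGroup_iff.mp hH.eigenvectorUnitary.2
  have hUA1 : UA * UAᴴ = 1 := Matrix.mem_unitaryGroup_iff.mp hA.eigenvectorUnitary.2
  have hUA1' : UAᴴ * UA = 1 := Matrix.mem_unitaryGroup_iff'.mp hA.eigenvectorUnitary.2
  have hUB1 : UB * UBᴴ = 1 := Matrix.mem_unitaryGroup_iff.mp hB.eigenvectorUnitary.2
  have hUB1' : UBᴴ * UB = 1 := Matrix.mem_unitaryGroup_iff'.mp hB.eigenvectorUnitary.2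
  set T : Matrix (U × V) (U × V) ℂ := UA ⊗ₖ UB with hT_def
  have hTT' : Tᴴ * T = 1 := by
    rw [hT_def, kron_conjT, ← Matrix.mul_kronecker_mul, hUA1', hUB1',
      Matrix.one_kronecker_one]
  have hTT : T * Tᴴ = 1 := mul_eq_one_comm.mp hTT'
  set Cm : Matrix (U × V) (U × V) ℂ := Uwᴴ * T with hCm_def
  have hCmH : Cmᴴ = Tᴴ * Uw := by
    rw [hCm_def, Matrix.conjTranspose_mul, Matrix.conjTranspose_conjTranspose]
  have hCm1 : Cmᴴ * Cm = 1 := by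
    rw [hCmH, hCm_def, Matrix.mul_assoc, ← Matrix.mul_assoc Uw, hUw1, Matrix.one_mul, hTT']
  have hCm1' : Cm * Cmᴴ = 1 := mul_eq_one_comm.mp hCm1
  set p : (U × V) → (U × V) → ℝ := fun k l => Complex.normSq (Cm k l) with hp_def
  have hpnn : ∀ k l, 0 ≤ p k l := fun k l => Complex.normSq_nonneg _
  have hpcol : ∀ l, ∑ k, p k l = 1 := by
    intro l
    have h1 : (Cmᴴ * Cm) l l = 1 := by rw [hCm1, Matrix.one_apply_eq]
    rw [Matrix.mul_apply] at h1
    have h2 : ∀ k, Cmᴴ l k * Cm k l = ((p k l : ℝ) : ℂ) := fun k => by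
      rw [Matrix.conjTranspose_apply]
      exact Complex.normSq_eq_conj_mul_self.symm
    rw [Finset.sum_congr rfl fun k _ => h2 k] at h1
    exact_mod_cast h1
  have hprow : ∀ k, ∑ l, p k l = 1 := by
    intro k
    have h1 : (Cm * Cmᴴ) k k = 1 := by rw [hCm1', Matrix.one_apply_eq]
    rw [Matrix.mul_apply] at h1
    have h2 : ∀ l, Cm k l * Cmᴴ l k = ((p k l : ℝ) : ℂ) := fun l => by
      rw [Matrix.conjTranspose_apply]
      exact Complex.mul_conj _
    rw [Finset.sum_congr rfl fun l _ => h2 l] at h1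
    exact_mod_cast h1
  set r : (U × V) → ℝ := fun l => ∑ k, lam k * p k l with hr_def
  have hlamnn : ∀ k, 0 ≤ lam k := fun k => hω.1.eigenvalues_nonneg k
  have halnn : ∀ i, 0 ≤ al i := fun i => hdA.1.eigenvalues_nonneg i
  have hbenn : ∀ j, 0 ≤ be j := fun j => hdB.1.eigenvalues_nonneg j
  have hrnn : ∀ l, 0 ≤ r l :=
    fun l => Finset.sum_nonneg fun k _ => mul_nonneg (hlamnn k) (hpnn k l)
  have hTwT : Tᴴ * ω * T = Cmᴴ * Matrix.diagonal (fun k => (lam k : ℂ)) * Cm := by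
    conv_lhs => rw [hH.spectral_theorem, Unitary.conjStarAlgAut_apply]
    rw [hCmH, hCm_def]
    simp only [Matrix.star_eq_conjTranspose, Matrix.mul_assoc]
    rfl
  have hrdiag : ∀ l, ((r l : ℝ) : ℂ) = (Tᴴ * ω * T) l l := by
    intro l
    rw [hTwT, Matrix.mul_apply]
    have h3 : ∀ k, (Cmᴴ * Matrix.diagonal (fun k => (lam k : ℂ))) l k * Cm k l
        = ((lam k * p k l : ℝ) : ℂ) := by
      intro k
      rw [Matrix.mul_diagonal, Matrix.conjTranspose_apply]
      rw [show star (Cm k l) * (lam k : ℂ) * Cm k l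
          = (lam k : ℂ) * (star (Cm k l) * Cm k l) by ring, Complex.star_def,
        ← Complex.normSq_eq_conj_mul_self]
      push_cast
      rfl
    rw [Finset.sum_congr rfl fun k _ => h3 k]
    simp only [hr_def]
    push_cast
    rfl
  have hsum_r_A : ∀ i : U, ∑ j : V, r (i, j) = al i := by
    intro i
    have hmA : margA (Tᴴ * ω * T) = UAᴴ * margA ω * UA := by
      have h := margA_conj_kron UA UB hUB1 ω
      rw [← hT_def] at h
      exact h
    have hdiagA : UAᴴ * margA ω * UA = Matrix.diagonal (fun i0 => (al i0 : ℂ)) :=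
      by
        have h := hA.conjStarAlgAut_star_eigenvectorUnitary
        rw [Unitary.conjStarAlgAut_star_apply] at h
        exact h
    have h1 : margA (Tᴴ * ω * T) i i = ((al i : ℝ) : ℂ) := by
      rw [hmA, hdiagA, Matrix.diagonal_apply_eq]
    have h2 : margA (Tᴴ * ω * T) i i = ∑ j, ((r (i, j) : ℝ) : ℂ) := by
      show (∑ j, (Tᴴ * ω * T) (i, j) (i, j)) = _
      exact Finset.sum_congr rfl fun j _ => (hrdiag (i, j)).symm
    rw [h2] at h1
    exact_mod_cast h1
  have hsum_r_B : ∀ j : V, ∑ i : U, r (i, j) = be j := by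
    intro j
    have hmB : margB (Tᴴ * ω * T) = UBᴴ * margB ω * UB := by
      have h := margB_conj_kron UA UB hUA1 ω
      rw [← hT_def] at h
      exact h
    have hdiagB : UBᴴ * margB ω * UB = Matrix.diagonal (fun j0 => (be j0 : ℂ)) :=
      by
        have h := hB.conjStarAlgAut_star_eigenvectorUnitary
        rw [Unitary.conjStarAlgAut_star_apply] at h
        exact h
    have h1 : margB (Tᴴ * ω * T) j j = ((be j : ℝ) : ℂ) := by
      rw [hmB, hdiagB, Matrix.diagonal_apply_eq]
    have h2 : margB (Tᴴ * ω * T) j j = ∑ i, ((r (i, j) : ℝ) : ℂ) := by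
      show (∑ i, (Tᴴ * ω * T) (i, j) (i, j)) = _
      exact Finset.sum_congr rfl fun i _ => (hrdiag (i, j)).symm
    rw [h2] at h1
    exact_mod_cast h1
  have hr_zero : ∀ l : U × V, al l.1 * be l.2 = 0 → r l = 0 := by
    intro l h0
    rcases mul_eq_zero.mp h0 with h | h
    · have hs : ∑ j, r (l.1, j) = 0 := by rw [hsum_r_A l.1, h]
      have h5 := (Finset.sum_eq_zero_iff_of_nonneg (fun j _ => hrnn (l.1, j))).mp hs l.2
        (Finset.mem_univ l.2)
      simpa using h5
    · have hs : ∑ i, r (i, l.2) = 0 := by rw [hsum_r_B l.2, h]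
      have h5 := (Finset.sum_eq_zero_iff_of_nonneg (fun i _ => hrnn (i, l.2))).mp hs l.1
        (Finset.mem_univ l.1)
      simpa using h5
  have hsupp : ∀ (l : U × V) (k : U × V), al l.1 * be l.2 = 0 → lam k * p k l = 0 := by
    intro l k h0
    have h1 : ∑ k, lam k * p k l = 0 := hr_zero l h0
    exact (Finset.sum_eq_zero_iff_of_nonneg
      (fun k _ => mul_nonneg (hlamnn k) (hpnn k l))).mp h1 k (Finset.mem_univ k)
  have gibbs : ∀ kl : (U × V) × (U × V),
      (lam kl.1 * p kl.1 kl.2 - (al kl.2.1 * be kl.2.2) * p kl.1 kl.2) / Real.log 2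
      ≤ lam kl.1 * p kl.1 kl.2 * Real.logb 2 (lam kl.1)
        - lam kl.1 * p kl.1 kl.2 * Real.logb 2 (al kl.2.1 * be kl.2.2) := by
    intro kl
    exact klein_term' (hlamnn kl.1) (mul_nonneg (halnn kl.2.1) (hbenn kl.2.2))
      (hpnn kl.1 kl.2) (fun h0 => hsupp kl.2 kl.1 h0)
  have big := Finset.sum_le_sum
    fun kl (_ : kl ∈ (Finset.univ : Finset ((U × V) × (U × V)))) => gibbs kl
  have S1 : ∑ kl : (U × V) × (U × V), lam kl.1 * p kl.1 kl.2 = 1 := by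
    rw [Fintype.sum_prod_type]
    have h : ∀ k, ∑ l, lam k * p k l = lam k := fun k => by
      rw [← Finset.mul_sum, hprow k, mul_one]
    rw [Finset.sum_congr rfl fun k _ => h k]
    exact sum_eigenvalues_eq_one hω
  have S2 : ∑ kl : (U × V) × (U × V), (al kl.2.1 * be kl.2.2) * p kl.1 kl.2 = 1 := by
    rw [Fintype.sum_prod_type, Finset.sum_comm]
    have h : ∀ l : U × V, ∑ k, (al l.1 * be l.2) * p k l = al l.1 * be l.2 := fun l => by
      rw [← Finset.mul_sum, hpcol l, mul_one]
    rw [Finset.sum_congr rfl fun l _ => h l, Fintype.sum_prod_type]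
    have h2 : ∀ i, ∑ j, al i * be j = al i := fun i => by
      rw [← Finset.mul_sum, sum_eigenvalues_eq_one hdB, mul_one]
    rw [Finset.sum_congr rfl fun i _ => h2 i]
    exact sum_eigenvalues_eq_one hdA
  have S3 : ∑ kl : (U × V) × (U × V), lam kl.1 * p kl.1 kl.2 * Real.logb 2 (lam kl.1)
      = ∑ k, lam k * Real.logb 2 (lam k) := by
    rw [Fintype.sum_prod_type]
    refine Finset.sum_congr rfl fun k _ => ?_
    calc ∑ l, lam k * p k l * Real.logb 2 (lam k)
        = ∑ l, (lam k * Real.logb 2 (lam k)) * p k l :=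
          Finset.sum_congr rfl fun l _ => by ring
      _ = lam k * Real.logb 2 (lam k) := by rw [← Finset.mul_sum, hprow k, mul_one]
  have S4 : ∑ kl : (U × V) × (U × V),
      lam kl.1 * p kl.1 kl.2 * Real.logb 2 (al kl.2.1 * be kl.2.2)
      = ∑ l : U × V, r l * Real.logb 2 (al l.1 * be l.2) := by
    rw [Fintype.sum_prod_type, Finset.sum_comm]
    refine Finset.sum_congr rfl fun l _ => ?_
    calc ∑ k, lam k * p k l * Real.logb 2 (al l.1 * be l.2)
        = (∑ k, lam k * p k l) * Real.logb 2 (al l.1 * be l.2) := (Finset.sum_mul _ _ _).symm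
      _ = r l * Real.logb 2 (al l.1 * be l.2) := rfl
  have hsplit : ∑ l : U × V, r l * Real.logb 2 (al l.1 * be l.2)
      = ∑ i, al i * Real.logb 2 (al i) + ∑ j, be j * Real.logb 2 (be j) := by
    have h : ∀ l : U × V, r l * Real.logb 2 (al l.1 * be l.2)
        = r l * Real.logb 2 (al l.1) + r l * Real.logb 2 (be l.2) := by
      intro l
      by_cases h1 : al l.1 = 0
      · rw [hr_zero l (by rw [h1, zero_mul]), zero_mul, zero_mul, zero_mul, add_zero]
      · by_cases h2 : be l.2 = 0
        · rw [hr_zero l (by rw [h2, mul_zero]), zero_mul, zero_mul, zero_mul, add_zero]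
        · rw [Real.logb_mul h1 h2]; ring
    rw [Finset.sum_congr rfl fun l _ => h l, Finset.sum_add_distrib]
    congr 1
    · rw [Fintype.sum_prod_type]
      refine Finset.sum_congr rfl fun i _ => ?_
      calc ∑ j, r (i, j) * Real.logb 2 (al i)
          = (∑ j, r (i, j)) * Real.logb 2 (al i) := (Finset.sum_mul _ _ _).symm
        _ = al i * Real.logb 2 (al i) := by rw [hsum_r_A]
    · rw [Fintype.sum_prod_type, Finset.sum_comm]
      refine Finset.sum_congr rfl fun j _ => ?_
      calc ∑ i, r (i, j) * Real.logb 2 (be j)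
          = (∑ i, r (i, j)) * Real.logb 2 (be j) := (Finset.sum_mul _ _ _).symm
        _ = be j * Real.logb 2 (be j) := by rw [hsum_r_B]
  have lhs_eval : ∑ kl : (U × V) × (U × V),
      ((lam kl.1 * p kl.1 kl.2 - (al kl.2.1 * be kl.2.2) * p kl.1 kl.2) / Real.log 2) = 0 := by
    rw [← Finset.sum_div, Finset.sum_sub_distrib, S1, S2, sub_self, zero_div]
  have rhs_eval : ∑ kl : (U × V) × (U × V),
      (lam kl.1 * p kl.1 kl.2 * Real.logb 2 (lam kl.1)
        - lam kl.1 * p kl.1 kl.2 * Real.logb 2 (al kl.2.1 * be kl.2.2))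
      = ∑ k, lam k * Real.logb 2 (lam k)
        - (∑ i, al i * Real.logb 2 (al i) + ∑ j, be j * Real.logb 2 (be j)) := by
    rw [Finset.sum_sub_distrib, S3, S4, hsplit]
  rw [lhs_eval, rhs_eval] at big
  have eω : vnEntropy ω = -∑ k, lam k * Real.logb 2 (lam k) := by
    rw [hlam_def, vnEntropy_eq_sum hH, Finset.sum_neg_distrib]
  have eA : vnEntropy (margA ω) = -∑ i, al i * Real.logb 2 (al i) := by
    rw [hal_def, vnEntropy_eq_sum hA, Finset.sum_neg_distrib]
  have eB : vnEntropy (margB ω) = -∑ j, be j * Real.logb 2 (be j) := by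
    rw [hbe_def, vnEntropy_eq_sum hB, Finset.sum_neg_distrib]
  rw [eω, eA, eB]
  linarith


/-! #### Araki–Lieb inequality -/

theorem vnEntropy_AL {ω : Matrix (U × V) (U × V) ℂ} (hω : IsDensityMatrix ω) :
    vnEntropy (margB ω) ≤ vnEntropy ω + vnEntropy (margA ω) := by
  classical
  obtain ⟨N, hN⟩ := Matrix.posSemidef_iff_eq_transpose_mul_self.mp hω.1
  set M : Matrix (U × V) (U × V) ℂ := Nᴴ with hM_def
  have hMM : M * Mᴴ = ω := by
    rw [hM_def, Matrix.conjTranspose_conjTranspose, ← hN]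
  set M' : Matrix V (U × (U × V)) ℂ := Matrix.of (fun v up => M (up.1, v) up.2) with hM'_def
  have claim1 : M' * M'ᴴ = margB ω := by
    ext v v'
    rw [Matrix.mul_apply]
    have h : ∀ up : U × (U × V),
        M' v up * M'ᴴ up v' = M (up.1, v) up.2 * star (M (up.1, v') up.2) := by
      intro up
      rw [Matrix.conjTranspose_apply]
      rfl
    rw [Finset.sum_congr rfl fun up _ => h up, Fintype.sum_prod_type]
    have h2 : ∀ u, (∑ q : U × V, M (u, v) q * star (M (u, v') q)) = ω (u, v) (u, v') := by
      intro u
      rw [← hMM, Matrix.mul_apply]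
      exact Finset.sum_congr rfl fun q _ => by rw [Matrix.conjTranspose_apply]
    rw [Finset.sum_congr rfl fun u _ => h2 u]
    rfl
  set ξ : Matrix (U × (U × V)) (U × (U × V)) ℂ := M'ᴴ * M' with hξ_def
  have hξpsd : ξ.PosSemidef := Matrix.posSemidef_conjTranspose_mul_self M'
  have hξtr : ξ.trace = 1 := by
    rw [hξ_def, Matrix.trace_mul_comm, claim1, margB_trace, hω.2]
  have hξd : IsDensityMatrix ξ := ⟨hξpsd, hξtr⟩
  have claim2 : margA ξ = (margA ω)ᵀ := by
    ext u u'
    show (∑ q : U × V, ξ (u, q) (u', q)) = (margA ω) u' u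
    have h : ∀ q : U × V, ξ (u, q) (u', q) = ∑ v, star (M (u, v) q) * M (u', v) q := by
      intro q
      rw [hξ_def, Matrix.mul_apply]
      exact Finset.sum_congr rfl fun v _ => by rw [Matrix.conjTranspose_apply]; rfl
    rw [Finset.sum_congr rfl fun q _ => h q, Finset.sum_comm]
    have h2 : ∀ v, (∑ q : U × V, star (M (u, v) q) * M (u', v) q) = ω (u', v) (u, v) := by
      intro v
      rw [← hMM, Matrix.mul_apply]
      refine Finset.sum_congr rfl fun q _ => ?_
      rw [Matrix.conjTranspose_apply]
      ring
    rw [Finset.sum_congr rfl fun v _ => h2 v]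
    rfl
  have claim3 : margB ξ = Mᴴ * M := by
    ext q q'
    show (∑ u, ξ (u, q) (u, q')) = (Mᴴ * M) q q'
    have h : ∀ u, ξ (u, q) (u, q') = ∑ v, star (M (u, v) q) * M (u, v) q' := by
      intro u
      rw [hξ_def, Matrix.mul_apply]
      exact Finset.sum_congr rfl fun v _ => by rw [Matrix.conjTranspose_apply]; rfl
    have h2 : (Mᴴ * M) q q' = ∑ u, ∑ v, star (M (u, v) q) * M (u, v) q' := by
      rw [Matrix.mul_apply, Fintype.sum_prod_type]
      exact Finset.sum_congr rfl fun u _ => Finset.sum_congr rfl fun v _ => by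
        rw [Matrix.conjTranspose_apply]
    rw [h2]
    exact Finset.sum_congr rfl fun u _ => h u
  have e1 : vnEntropy (margB ω) = vnEntropy ξ := by
    rw [← claim1, vnEntropy_mul_conjTranspose M']
  have step := vnEntropy_subadd hξd
  rw [claim2, claim3] at step
  have e2 : vnEntropy ((margA ω)ᵀ) = vnEntropy (margA ω) :=
    vnEntropy_transpose (margA_density hω).1.1
  have e3 : vnEntropy (Mᴴ * M) = vnEntropy ω := by
    rw [← vnEntropy_mul_conjTranspose M, hMM]
  rw [e1]
  calc vnEntropy ξ ≤ vnEntropy ((margA ω)ᵀ) + vnEntropy (Mᴴ * M) := step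
    _ = vnEntropy (margA ω) + vnEntropy ω := by rw [e2, e3]
    _ = vnEntropy ω + vnEntropy (margA ω) := by ring

end TwoParty


section KronEntropy

open Matrix Polynomial
open scoped Kronecker ComplexOrder

variable {U : Type} [Fintype U] [DecidableEq U] {V : Type} [Fintype V] [DecidableEq V]

lemma kron_posSemidef {A : Matrix U U ℂ} {B : Matrix V V ℂ}
    (hA : A.PosSemidef) (hB : B.PosSemidef) : (A ⊗ₖ B).PosSemidef := by
  obtain ⟨A', hA'⟩ := Matrix.posSemidef_iff_eq_transpose_mul_self.mp hA
  obtain ⟨B', hB'⟩ := Matrix.posSemidef_iff_eq_transpose_mul_self.mp hB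
  rw [hA', hB', Matrix.mul_kronecker_mul, ← kron_conjT]
  exact Matrix.posSemidef_conjTranspose_mul_self _

lemma kron_density {A : Matrix U U ℂ} {B : Matrix V V ℂ}
    (hA : IsDensityMatrix A) (hB : IsDensityMatrix B) : IsDensityMatrix (A ⊗ₖ B) :=
  ⟨kron_posSemidef hA.1 hB.1, by rw [Matrix.trace_kronecker, hA.2, hB.2, mul_one]⟩

lemma kron_isHermitian {A : Matrix U U ℂ} {B : Matrix V V ℂ}
    (hA : A.IsHermitian) (hB : B.IsHermitian) : (A ⊗ₖ B).IsHermitian := by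
  show (A ⊗ₖ B)ᴴ = A ⊗ₖ B
  rw [kron_conjT, hA.eq, hB.eq]

theorem vnEntropy_kron {A : Matrix U U ℂ} {B : Matrix V V ℂ}
    (hA : IsDensityMatrix A) (hB : IsDensityMatrix B) :
    vnEntropy (A ⊗ₖ B) = vnEntropy A + vnEntropy B := by
  classical
  have hAh : A.IsHermitian := hA.1.1
  have hBh : B.IsHermitian := hB.1.1
  set al : U → ℝ := hAh.eigenvalues with hal_def
  set be : V → ℝ := hBh.eigenvalues with hbe_def
  set UA : Matrix U U ℂ := (hAh.eigenvectorUnitary : Matrix U U ℂ) with hUA_def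
  set UB : Matrix V V ℂ := (hBh.eigenvectorUnitary : Matrix V V ℂ) with hUB_def
  have hUA1 : UA * UAᴴ = 1 := Matrix.mem_unitaryGroup_iff.mp hAh.eigenvectorUnitary.2
  have hUB1 : UB * UBᴴ = 1 := Matrix.mem_unitaryGroup_iff.mp hBh.eigenvectorUnitary.2
  have hUU1 : (UA ⊗ₖ UB) * (UA ⊗ₖ UB)ᴴ = 1 := by
    rw [kron_conjT, ← Matrix.mul_kronecker_mul, hUA1, hUB1, Matrix.one_kronecker_one]
  have hsp : A ⊗ₖ B = (UA ⊗ₖ UB)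
      * Matrix.diagonal (fun ij : U × V => ((al ij.1 : ℂ) * (be ij.2 : ℂ)))
      * (UA ⊗ₖ UB)ᴴ := by
    conv_lhs => rw [hAh.spectral_theorem, hBh.spectral_theorem, Unitary.conjStarAlgAut_apply,
      Unitary.conjStarAlgAut_apply]
    rw [Matrix.mul_kronecker_mul, Matrix.mul_kronecker_mul,
      Matrix.diagonal_kronecker_diagonal]
    simp only [Matrix.star_eq_conjTranspose]
    rw [← kron_conjT]
    rfl
  have hch : (A ⊗ₖ B).charpoly
      = ∏ ij : U × V, (X - C ((al ij.1 : ℂ) * (be ij.2 : ℂ))) := by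
    rw [hsp, charpoly_conj_of_mul_eq_one hUU1, charpoly_diagonal']
  have hherm := kron_isHermitian hAh hBh
  rw [vnEntropy_eq_entRoots hherm, entRoots, hch, roots_prod_X_sub_C'', Multiset.map_map]
  have hfin : (Multiset.map ((fun z : ℂ => -(z.re * Real.logb 2 z.re))
        ∘ fun ij : U × V => ((al ij.1 : ℂ) * (be ij.2 : ℂ))) Finset.univ.val).sum
      = ∑ ij : U × V, -((al ij.1 * be ij.2) * Real.logb 2 (al ij.1 * be ij.2)) := by
    show Finset.sum Finset.univ _ = _
    refine Finset.sum_congr rfl fun ij _ => ?_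
    simp [← Complex.ofReal_mul]
  rw [hfin]
  have per : ∀ (i : U) (j : V), -((al i * be j) * Real.logb 2 (al i * be j))
      = be j * -(al i * Real.logb 2 (al i)) + al i * -(be j * Real.logb 2 (be j)) := by
    intro i j
    by_cases h1 : al i = 0
    · simp [h1]
    · by_cases h2 : be j = 0
      · simp [h2]
      · rw [Real.logb_mul h1 h2]; ring
  rw [Fintype.sum_prod_type]
  rw [Finset.sum_congr rfl fun i _ => Finset.sum_congr rfl fun j _ => per i j]
  have split : ∑ i, ∑ j, (be j * -(al i * Real.logb 2 (al i))
        + al i * -(be j * Real.logb 2 (be j)))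
      = (∑ i, -(al i * Real.logb 2 (al i))) + (∑ j, -(be j * Real.logb 2 (be j))) := by
    rw [Finset.sum_congr rfl fun i (_ : i ∈ Finset.univ) => Finset.sum_add_distrib,
      Finset.sum_add_distrib]
    congr 1
    · calc ∑ i, ∑ j, be j * -(al i * Real.logb 2 (al i))
          = ∑ i, (∑ j, be j) * -(al i * Real.logb 2 (al i)) :=
            Finset.sum_congr rfl fun i _ => (Finset.sum_mul _ _ _).symm
        _ = ∑ i, -(al i * Real.logb 2 (al i)) := by
            rw [sum_eigenvalues_eq_one hB]
            exact Finset.sum_congr rfl fun i _ => one_mul _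
    · calc ∑ i, ∑ j, al i * -(be j * Real.logb 2 (be j))
          = ∑ i, al i * ∑ j, -(be j * Real.logb 2 (be j)) :=
            Finset.sum_congr rfl fun i _ => (Finset.mul_sum _ _ _).symm
        _ = (∑ i, al i) * ∑ j, -(be j * Real.logb 2 (be j)) := (Finset.sum_mul _ _ _).symm
        _ = ∑ j, -(be j * Real.logb 2 (be j)) := by
            rw [sum_eigenvalues_eq_one hA, one_mul]
  rw [split, vnEntropy_eq_sum hAh, vnEntropy_eq_sum hBh]

end KronEntropy


section Plumbing

open Matrix
open scoped Kronecker ComplexOrder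

lemma posSemidef_reindex {n m : Type} [Fintype n] [DecidableEq n] [Fintype m] [DecidableEq m]
    (e : n ≃ m) {A : Matrix n n ℂ} (h : A.PosSemidef) : (Matrix.reindex e e A).PosSemidef := by
  obtain ⟨B, hB⟩ := Matrix.posSemidef_iff_eq_transpose_mul_self.mp h
  rw [hB, Matrix.reindex_apply, ← Matrix.submatrix_mul_equiv Bᴴ B e.symm e.symm e.symm,
    ← Matrix.conjTranspose_submatrix]
  exact Matrix.posSemidef_conjTranspose_mul_self _

lemma trace_reindex {n m : Type} [Fintype n] [DecidableEq n] [Fintype m] [DecidableEq m]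
    (e : n ≃ m) (A : Matrix n n ℂ) : (Matrix.reindex e e A).trace = A.trace := by
  rw [Matrix.trace, Matrix.trace]
  exact Fintype.sum_equiv e.symm _ _ fun x => rfl

lemma density_reindex {n m : Type} [Fintype n] [DecidableEq n] [Fintype m] [DecidableEq m]
    (e : n ≃ m) {A : Matrix n n ℂ} (h : IsDensityMatrix A) :
    IsDensityMatrix (Matrix.reindex e e A) :=
  ⟨posSemidef_reindex e h.1, (trace_reindex e A).trans h.2⟩

variable {ι : Type} [Fintype ι] [DecidableEq ι] {τ : ι → Type}
  [∀ i, Fintype (τ i)] [∀ i, DecidableEq (τ i)]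
  {E : Type} [Fintype E] [DecidableEq E]

/-- Partial trace over the whole system, leaving the environment. -/
noncomputable def envMat (η : Matrix ((∀ i, τ i) × E) ((∀ i, τ i) × E) ℂ) : Matrix E E ℂ :=
  Matrix.of fun e e' => ∑ w, η (w, e) (w, e')

/-- Regrouping equivalence splitting a configuration into the part in `S`, the environment,
and the part outside `S`. -/
def glueEquiv (S : Finset ι) :
    ((∀ i, τ i) × E) ≃ (((∀ i : {j // j ∈ S}, τ i.1) × E) × (∀ i : {j // j ∉ S}, τ i.1)) where
  toFun we := ((fun i => we.1 i.1, we.2), fun i => we.1 i.1)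
  invFun xe := (fun i => if h : i ∈ S then xe.1.1 ⟨i, h⟩ else xe.2 ⟨i, h⟩, xe.1.2)
  left_inv := by
    rintro ⟨w, e⟩
    refine Prod.ext (funext fun i => ?_) rfl
    by_cases h : i ∈ S <;> simp [h]
  right_inv := by
    rintro ⟨⟨x, e⟩, z⟩
    refine Prod.ext (Prod.ext (funext fun i => ?_) rfl) (funext fun i => ?_)
    · simp [i.2]
    · simp [i.2]

lemma reducedE_eq_margA (η : Matrix ((∀ i, τ i) × E) ((∀ i, τ i) × E) ℂ) (S : Finset ι) :
    reducedE η S = margA (Matrix.reindex (glueEquiv (τ := τ) (E := E) S)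
      (glueEquiv (τ := τ) (E := E) S) η) := by
  ext xe ye
  rfl

lemma reducedE_density {η : Matrix ((∀ i, τ i) × E) ((∀ i, τ i) × E) ℂ}
    (hη : IsDensityMatrix η) (S : Finset ι) : IsDensityMatrix (reducedE η S) := by
  rw [reducedE_eq_margA]
  exact margA_density (density_reindex _ hη)

lemma margB_reducedE (η : Matrix ((∀ i, τ i) × E) ((∀ i, τ i) × E) ℂ) (S : Finset ι) :
    margB (reducedE η S) = envMat η := by
  ext e e'
  show (∑ x, reducedE η S (x, e) (x, e')) = ∑ w, η (w, e) (w, e')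
  have h1 : ∀ x : (∀ i : {j // j ∈ S}, τ i.1), reducedE η S (x, e) (x, e')
      = ∑ z : (∀ i : {j // j ∉ S}, τ i.1),
          η ((glueEquiv (τ := τ) (E := E) S).symm ((x, e), z))
            ((glueEquiv (τ := τ) (E := E) S).symm ((x, e'), z)) := fun x => rfl
  rw [Finset.sum_congr rfl fun x _ => h1 x]
  have h2 : ∑ pr : ((∀ i : {j // j ∈ S}, τ i.1) × (∀ i : {j // j ∉ S}, τ i.1)),
      η ((glueEquiv (τ := τ) (E := E) S).symm ((pr.1, e), pr.2))
        ((glueEquiv (τ := τ) (E := E) S).symm ((pr.1, e'), pr.2))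
      = ∑ w, η (w, e) (w, e') :=
    Fintype.sum_equiv (Equiv.piEquivPiSubtypeProd (fun i => i ∈ S) τ).symm _ _ fun pr => rfl
  rw [← h2, Fintype.sum_prod_type]

lemma card_emptyPi : Fintype.card (∀ i : {j // j ∈ (∅ : Finset ι)}, τ i.1) = 1 := by
  refine Fintype.card_eq_one_iff.mpr ⟨fun i => absurd i.2 (Finset.notMem_empty i.1), ?_⟩
  intro y
  funext i
  exact absurd i.2 (Finset.notMem_empty i.1)

lemma entSE_empty (η : Matrix ((∀ i, τ i) × E) ((∀ i, τ i) × E) ℂ)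
    (hη : IsDensityMatrix η) : entSE η (∅ : Finset ι) = vnEntropy (envMat η) := by
  have hd : IsDensityMatrix (reducedE η (∅ : Finset ι)) := reducedE_density hη ∅
  have h1 := vnEntropy_subadd hd
  have h2 := vnEntropy_AL hd
  have hA0 : vnEntropy (margA (reducedE η (∅ : Finset ι))) = 0 := by
    have hu := vnEntropy_le_logb_card (margA_density hd)
    have hl := vnEntropy_nonneg (margA_density hd)
    rw [card_emptyPi] at hu
    simp only [Nat.cast_one, Real.logb_one] at hu
    linarith
  rw [margB_reducedE η ∅] at h1 h2
  rw [hA0] at h1 h2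
  rw [entSE]
  linarith

theorem condMI_lower {η : Matrix ((∀ i, τ i) × E) ((∀ i, τ i) × E) ℂ}
    (hη : IsDensityMatrix η) :
    -((∑ i : ι, Real.logb 2 (Fintype.card (∀ j : {k // k ∈ ({i} : Finset ι)}, τ j.1)))
      + Real.logb 2 (Fintype.card (∀ j : {k // k ∈ (Finset.univ : Finset ι)}, τ j.1)))
      ≤ condMI η := by
  set HE := vnEntropy (envMat η) with hHE_def
  have hi : ∀ i : ι,
      HE - Real.logb 2 (Fintype.card (∀ j : {k // k ∈ ({i} : Finset ι)}, τ j.1))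
        ≤ entSE η {i} := by
    intro i
    have hd := reducedE_density hη ({i} : Finset ι)
    have h2 := vnEntropy_AL hd
    rw [margB_reducedE] at h2
    have h3 := vnEntropy_le_logb_card (margA_density hd)
    rw [entSE]
    rw [hHE_def]
    linarith
  have huniv : entSE η Finset.univ
      ≤ Real.logb 2 (Fintype.card (∀ j : {k // k ∈ (Finset.univ : Finset ι)}, τ j.1)) + HE := by
    have hd := reducedE_density hη Finset.univ
    have h1 := vnEntropy_subadd hd
    rw [margB_reducedE] at h1
    have h3 := vnEntropy_le_logb_card (margA_density hd)
    rw [entSE, hHE_def]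
    linarith
  have hE0 : entSE η (∅ : Finset ι) = HE := entSE_empty η hη
  rw [condMI, hE0]
  have hsum := Finset.sum_le_sum fun i (_ : i ∈ (Finset.univ : Finset ι)) => hi i
  rw [Finset.sum_sub_distrib, Finset.sum_const, Finset.card_univ, nsmul_eq_mul] at hsum
  linarith

end Plumbing


section ProdExt

open Matrix
open scoped Kronecker ComplexOrder

/-- Pairing equivalence for two families together with environments. -/
def pairPiEquiv {κ : Type} (A B : κ → Type) (E1 E2 : Type) :
    (((∀ k, A k) × E1) × ((∀ k, B k) × E2)) ≃ ((∀ k, A k × B k) × (E1 × E2)) where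
  toFun p := (fun k => (p.1.1 k, p.2.1 k), (p.1.2, p.2.2))
  invFun q := ((fun k => (q.1 k).1, q.2.1), (fun k => (q.1 k).2, q.2.2))
  left_inv p := rfl
  right_inv q := rfl

variable {m : ℕ} {dX dY : Fin m → ℕ} {E1 E2 : Type}
  [Fintype E1] [DecidableEq E1] [Fintype E2] [DecidableEq E2]

/-- The product extension of two extensions, as a state on the paired systems with
environment `E1 × E2`. -/
noncomputable def prodExt
    (ρe : Matrix ((∀ i, Fin (dX i)) × E1) ((∀ i, Fin (dX i)) × E1) ℂ)
    (σe : Matrix ((∀ i, Fin (dY i)) × E2) ((∀ i, Fin (dY i)) × E2) ℂ) :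
    Matrix ((∀ i, Fin (dX i) × Fin (dY i)) × (E1 × E2))
      ((∀ i, Fin (dX i) × Fin (dY i)) × (E1 × E2)) ℂ :=
  Matrix.reindex (pairPiEquiv (fun i => Fin (dX i)) (fun i => Fin (dY i)) E1 E2)
    (pairPiEquiv (fun i => Fin (dX i)) (fun i => Fin (dY i)) E1 E2) (ρe ⊗ₖ σe)

variable {ρe : Matrix ((∀ i, Fin (dX i)) × E1) ((∀ i, Fin (dX i)) × E1) ℂ}
  {σe : Matrix ((∀ i, Fin (dY i)) × E2) ((∀ i, Fin (dY i)) × E2) ℂ}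

lemma prodExt_density (hρe : IsDensityMatrix ρe) (hσe : IsDensityMatrix σe) :
    IsDensityMatrix (prodExt ρe σe) :=
  density_reindex _ (kron_density hρe hσe)

/-- Pi-of-products / product-of-Pis equivalence. -/
def piProdEquiv {κ : Type} (A B : κ → Type) :
    (∀ k, A k × B k) ≃ ((∀ k, A k) × (∀ k, B k)) where
  toFun f := (fun k => (f k).1, fun k => (f k).2)
  invFun p k := (p.1 k, p.2 k)
  left_inv f := rfl
  right_inv p := rfl

lemma reducedE_prodExt (S : Finset (Fin m)) :
    reducedE (prodExt ρe σe) S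
      = Matrix.reindex
          (pairPiEquiv (fun i : {j // j ∈ S} => Fin (dX i.1))
            (fun i : {j // j ∈ S} => Fin (dY i.1)) E1 E2)
          (pairPiEquiv (fun i : {j // j ∈ S} => Fin (dX i.1))
            (fun i : {j // j ∈ S} => Fin (dY i.1)) E1 E2)
          ((reducedE ρe S) ⊗ₖ (reducedE σe S)) := by
  ext q q'
  obtain ⟨xy, e⟩ := q
  obtain ⟨xy', e'⟩ := q'
  show (∑ z : (∀ i : {j // j ∉ S}, Fin (dX i.1) × Fin (dY i.1)),
      prodExt ρe σe
        ((fun i => if h : i ∈ S then xy ⟨i, h⟩ else z ⟨i, h⟩), e)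
        ((fun i => if h : i ∈ S then xy' ⟨i, h⟩ else z ⟨i, h⟩), e')) = _
  have key : ∀ z : (∀ i : {j // j ∉ S}, Fin (dX i.1) × Fin (dY i.1)),
      prodExt ρe σe
        ((fun i => if h : i ∈ S then xy ⟨i, h⟩ else z ⟨i, h⟩), e)
        ((fun i => if h : i ∈ S then xy' ⟨i, h⟩ else z ⟨i, h⟩), e')
      = ρe ((fun i => if h : i ∈ S then (xy ⟨i, h⟩).1 else (z ⟨i, h⟩).1), e.1)
          ((fun i => if h : i ∈ S then (xy' ⟨i, h⟩).1 else (z ⟨i, h⟩).1), e'.1)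
        * σe ((fun i => if h : i ∈ S then (xy ⟨i, h⟩).2 else (z ⟨i, h⟩).2), e.2)
          ((fun i => if h : i ∈ S then (xy' ⟨i, h⟩).2 else (z ⟨i, h⟩).2), e'.2) := by
    intro z
    have h1 : ∀ (f : ∀ i : {j // j ∈ S}, Fin (dX i.1) × Fin (dY i.1))
        (g : ∀ i : {j // j ∉ S}, Fin (dX i.1) × Fin (dY i.1)),
        (fun i : Fin m => ((if h : i ∈ S then f ⟨i, h⟩ else g ⟨i, h⟩) :
            Fin (dX i) × Fin (dY i)).1)
          = fun i => if h : i ∈ S then (f ⟨i, h⟩).1 else (g ⟨i, h⟩).1 :=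
      fun f g => funext fun i => apply_dite Prod.fst _ _ _
    have h2 : ∀ (f : ∀ i : {j // j ∈ S}, Fin (dX i.1) × Fin (dY i.1))
        (g : ∀ i : {j // j ∉ S}, Fin (dX i.1) × Fin (dY i.1)),
        (fun i : Fin m => ((if h : i ∈ S then f ⟨i, h⟩ else g ⟨i, h⟩) :
            Fin (dX i) × Fin (dY i)).2)
          = fun i => if h : i ∈ S then (f ⟨i, h⟩).2 else (g ⟨i, h⟩).2 :=
      fun f g => funext fun i => apply_dite Prod.snd _ _ _
    simp only [prodExt, Matrix.reindex_apply, Matrix.submatrix_apply, pairPiEquiv,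
      Equiv.coe_fn_symm_mk, Matrix.kroneckerMap_apply]
    rw [h1 xy z, h1 xy' z, h2 xy z, h2 xy' z]
  rw [Finset.sum_congr rfl fun z _ => key z]
  have hsplit : ∀ (pr : (∀ i : {j // j ∉ S}, Fin (dX i.1))
        × (∀ i : {j // j ∉ S}, Fin (dY i.1))), True := fun _ => trivial
  calc (∑ z : (∀ i : {j // j ∉ S}, Fin (dX i.1) × Fin (dY i.1)),
      ρe ((fun i => if h : i ∈ S then (xy ⟨i, h⟩).1 else (z ⟨i, h⟩).1), e.1)
          ((fun i => if h : i ∈ S then (xy' ⟨i, h⟩).1 else (z ⟨i, h⟩).1), e'.1)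
        * σe ((fun i => if h : i ∈ S then (xy ⟨i, h⟩).2 else (z ⟨i, h⟩).2), e.2)
          ((fun i => if h : i ∈ S then (xy' ⟨i, h⟩).2 else (z ⟨i, h⟩).2), e'.2))
      = ∑ pr : (∀ i : {j // j ∉ S}, Fin (dX i.1)) × (∀ i : {j // j ∉ S}, Fin (dY i.1)),
          ρe ((fun i => if h : i ∈ S then (xy ⟨i, h⟩).1 else pr.1 ⟨i, h⟩), e.1)
              ((fun i => if h : i ∈ S then (xy' ⟨i, h⟩).1 else pr.1 ⟨i, h⟩), e'.1)
            * σe ((fun i => if h : i ∈ S then (xy ⟨i, h⟩).2 else pr.2 ⟨i, h⟩), e.2)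
              ((fun i => if h : i ∈ S then (xy' ⟨i, h⟩).2 else pr.2 ⟨i, h⟩), e'.2) :=
        Fintype.sum_equiv (piProdEquiv (fun i : {j // j ∉ S} => Fin (dX i.1))
          (fun i : {j // j ∉ S} => Fin (dY i.1))) _ _ fun z => rfl
    _ = ∑ zx : ∀ i : {j // j ∉ S}, Fin (dX i.1), ∑ zy : ∀ i : {j // j ∉ S}, Fin (dY i.1),
          ρe ((fun i => if h : i ∈ S then (xy ⟨i, h⟩).1 else zx ⟨i, h⟩), e.1)
              ((fun i => if h : i ∈ S then (xy' ⟨i, h⟩).1 else zx ⟨i, h⟩), e'.1)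
            * σe ((fun i => if h : i ∈ S then (xy ⟨i, h⟩).2 else zy ⟨i, h⟩), e.2)
              ((fun i => if h : i ∈ S then (xy' ⟨i, h⟩).2 else zy ⟨i, h⟩), e'.2) := by
        rw [Fintype.sum_prod_type]
    _ = (∑ zx : ∀ i : {j // j ∉ S}, Fin (dX i.1),
          ρe ((fun i => if h : i ∈ S then (xy ⟨i, h⟩).1 else zx ⟨i, h⟩), e.1)
            ((fun i => if h : i ∈ S then (xy' ⟨i, h⟩).1 else zx ⟨i, h⟩), e'.1))
        * (∑ zy : ∀ i : {j // j ∉ S}, Fin (dY i.1),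
          σe ((fun i => if h : i ∈ S then (xy ⟨i, h⟩).2 else zy ⟨i, h⟩), e.2)
            ((fun i => if h : i ∈ S then (xy' ⟨i, h⟩).2 else zy ⟨i, h⟩), e'.2)) := by
        apply (Finset.sum_mul_sum _ _ _ _).symm
    _ = _ := rfl

lemma entSE_prodExt (hρe : IsDensityMatrix ρe) (hσe : IsDensityMatrix σe)
    (S : Finset (Fin m)) :
    entSE (prodExt ρe σe) S = entSE ρe S + entSE σe S := by
  rw [entSE, reducedE_prodExt, vnEntropy_reindex,
    vnEntropy_kron (reducedE_density hρe S) (reducedE_density hσe S), entSE, entSE]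

lemma condMI_prodExt (hρe : IsDensityMatrix ρe) (hσe : IsDensityMatrix σe) :
    condMI (prodExt ρe σe) = condMI ρe + condMI σe := by
  rw [condMI, condMI, condMI,
    Finset.sum_congr rfl fun i (_ : i ∈ Finset.univ) => entSE_prodExt hρe hσe {i},
    entSE_prodExt hρe hσe Finset.univ, entSE_prodExt hρe hσe ∅, Finset.sum_add_distrib]
  ring

lemma ptraceE_prodExt
    (ρ : Matrix (∀ i, Fin (dX i)) (∀ i, Fin (dX i)) ℂ)
    (σ : Matrix (∀ i, Fin (dY i)) (∀ i, Fin (dY i)) ℂ)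
    (hρ : ptraceE ρe = ρ) (hσ : ptraceE σe = σ) :
    ptraceE (prodExt ρe σe) = pairedProd ρ σ := by
  ext w w'
  show (∑ e : E1 × E2, prodExt ρe σe (w, e) (w', e))
      = ρ (fun i => (w i).1) (fun i => (w' i).1) * σ (fun i => (w i).2) (fun i => (w' i).2)
  rw [← hρ, ← hσ]
  show _ = (∑ e1, ρe ((fun i => (w i).1), e1) ((fun i => (w' i).1), e1))
      * (∑ e2, σe ((fun i => (w i).2), e2) ((fun i => (w' i).2), e2))
  rw [Fintype.sum_prod_type]
  have hterm : ∀ (e1 : E1) (e2 : E2), prodExt ρe σe (w, (e1, e2)) (w', (e1, e2))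
      = ρe ((fun i => (w i).1), e1) ((fun i => (w' i).1), e1)
        * σe ((fun i => (w i).2), e2) ((fun i => (w' i).2), e2) := fun e1 e2 => rfl
  refine Eq.trans (Finset.sum_congr rfl fun e1 _ =>
    Finset.sum_congr rfl fun e2 _ => hterm e1 e2) ?_
  apply (Finset.sum_mul_sum _ _ _ _).symm

end ProdExt


section Assembly

open Matrix
open scoped Kronecker ComplexOrder

variable {ι : Type} [Fintype ι] [DecidableEq ι] {τ : ι → Type}
  [∀ i, Fintype (τ i)] [∀ i, DecidableEq (τ i)]

section EReindex

variable {E F : Type} [Fintype E] [DecidableEq E] [Fintype F] [DecidableEq F]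

/-- Relabel the environment of an extension. -/
noncomputable def reindexE (e : E ≃ F) (η : Matrix ((∀ i, τ i) × E) ((∀ i, τ i) × E) ℂ) :
    Matrix ((∀ i, τ i) × F) ((∀ i, τ i) × F) ℂ :=
  Matrix.reindex (Equiv.prodCongr (Equiv.refl _) e) (Equiv.prodCongr (Equiv.refl _) e) η

lemma reindexE_density (e : E ≃ F) {η : Matrix ((∀ i, τ i) × E) ((∀ i, τ i) × E) ℂ}
    (hη : IsDensityMatrix η) : IsDensityMatrix (reindexE e η) :=
  density_reindex _ hη

lemma reducedE_reindexE (e : E ≃ F) (η : Matrix ((∀ i, τ i) × E) ((∀ i, τ i) × E) ℂ)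
    (S : Finset ι) :
    reducedE (reindexE e η) S
      = Matrix.reindex (Equiv.prodCongr (Equiv.refl _) e) (Equiv.prodCongr (Equiv.refl _) e)
          (reducedE η S) := by
  ext q q'
  rfl

lemma entSE_reindexE (e : E ≃ F) (η : Matrix ((∀ i, τ i) × E) ((∀ i, τ i) × E) ℂ)
    (S : Finset ι) : entSE (reindexE e η) S = entSE η S := by
  rw [entSE, entSE, reducedE_reindexE, vnEntropy_reindex]

lemma condMI_reindexE (e : E ≃ F) (η : Matrix ((∀ i, τ i) × E) ((∀ i, τ i) × E) ℂ) :
    condMI (reindexE e η) = condMI η := by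
  rw [condMI, condMI, Finset.sum_congr rfl fun i _ => entSE_reindexE e η {i},
    entSE_reindexE e η Finset.univ, entSE_reindexE e η ∅]

lemma ptraceE_reindexE (e : E ≃ F) (η : Matrix ((∀ i, τ i) × E) ((∀ i, τ i) × E) ℂ) :
    ptraceE (reindexE e η) = ptraceE η := by
  ext w w'
  show (∑ f : F, reindexE e η (w, f) (w', f)) = ∑ e0 : E, η (w, e0) (w', e0)
  exact Fintype.sum_equiv e.symm _ _ fun f => rfl

end EReindex

/-- The set of conditional-mutual-information values over finite extensions. -/
def extSet (ρ0 : Matrix (∀ i, τ i) (∀ i, τ i) ℂ) : Set ℝ :=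
  {x : ℝ | ∃ dE : ℕ, 1 ≤ dE ∧
    ∃ ρe : Matrix ((∀ i, τ i) × Fin dE) ((∀ i, τ i) × Fin dE) ℂ,
      IsDensityMatrix ρe ∧ ptraceE ρe = ρ0 ∧ x = condMI ρe}

lemma Esq_eq_extSet (ρ0 : Matrix (∀ i, τ i) (∀ i, τ i) ℂ) :
    Esq ρ0 = (1 / 2) * sInf (extSet ρ0) := rfl

lemma extSet_nonempty {ρ0 : Matrix (∀ i, τ i) (∀ i, τ i) ℂ} (hρ0 : IsDensityMatrix ρ0) :
    (extSet ρ0).Nonempty := by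
  classical
  let eT : (∀ i, τ i) ≃ ((∀ i, τ i) × Fin 1) := (Equiv.prodUnique (∀ i, τ i) (Fin 1)).symm
  refine ⟨condMI (Matrix.reindex eT eT ρ0), 1, le_refl 1, Matrix.reindex eT eT ρ0,
    density_reindex eT hρ0, ?_, rfl⟩
  ext w w'
  show (∑ e : Fin 1, (Matrix.reindex eT eT ρ0) (w, e) (w', e)) = ρ0 w w'
  rw [Fin.sum_univ_one]
  rfl

lemma extSet_bddBelow (ρ0 : Matrix (∀ i, τ i) (∀ i, τ i) ℂ) : BddBelow (extSet ρ0) := by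
  refine ⟨-((∑ i : ι, Real.logb 2 (Fintype.card (∀ j : {k // k ∈ ({i} : Finset ι)}, τ j.1)))
      + Real.logb 2 (Fintype.card (∀ j : {k // k ∈ (Finset.univ : Finset ι)}, τ j.1))), ?_⟩
  rintro x ⟨dE, _, ρe, hρe, _, rfl⟩
  exact condMI_lower hρe

end Assembly

/-- Subadditivity of the multiparty squashed entanglement on tensor products:
E_sq(X_1Y_1;…;X_mY_m)_{ρ⊗σ} ≤ E_sq(X_1;…;X_m)_ρ + E_sq(Y_1;…;Y_m)_σ. -/
theorem Esq_subadditive {m : ℕ} {dX dY : Fin m → ℕ}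
    (ρ : Matrix (∀ i, Fin (dX i)) (∀ i, Fin (dX i)) ℂ)
    (σ : Matrix (∀ i, Fin (dY i)) (∀ i, Fin (dY i)) ℂ)
    (hρ : IsDensityMatrix ρ) (hσ : IsDensityMatrix σ) :
    Esq (pairedProd ρ σ) ≤ Esq ρ + Esq σ := by
  classical
  rw [Esq_eq_extSet, Esq_eq_extSet, Esq_eq_extSet]
  have hAne : (extSet ρ).Nonempty := extSet_nonempty hρ
  have hBne : (extSet σ).Nonempty := extSet_nonempty hσ
  have hSbdd : BddBelow (extSet (pairedProd ρ σ)) := extSet_bddBelow _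
  have hmem : ∀ a ∈ extSet ρ, ∀ b ∈ extSet σ, a + b ∈ extSet (pairedProd ρ σ) := by
    rintro a ⟨d1, hd1, ρe, hρe, hρtr, rfl⟩ b ⟨d2, hd2, σe, hσe, hσtr, rfl⟩
    refine ⟨d1 * d2, ?_, reindexE finProdFinEquiv (prodExt ρe σe),
      reindexE_density _ (prodExt_density hρe hσe), ?_, ?_⟩
    · have h := Nat.mul_le_mul hd1 hd2
      simpa using h
    · rw [ptraceE_reindexE, ptraceE_prodExt ρ σ hρtr hσtr]
    · rw [condMI_reindexE, condMI_prodExt hρe hσe]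
  have key : sInf (extSet (pairedProd ρ σ)) ≤ sInf (extSet ρ) + sInf (extSet σ) := by
    have h2 : ∀ b ∈ extSet σ, sInf (extSet (pairedProd ρ σ)) - b ≤ sInf (extSet ρ) := by
      intro b hb
      refine le_csInf hAne fun a ha => ?_
      have h3 := csInf_le hSbdd (hmem a ha b hb)
      linarith
    have h4 : sInf (extSet (pairedProd ρ σ)) - sInf (extSet ρ) ≤ sInf (extSet σ) := by
      refine le_csInf hBne fun b hb => ?_
      have := h2 b hb
      linarith
    linarith
  linarith
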